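/- Fix $n \in \mathbb{Z}$ nonzero with $\Delta_n(t)=nt^2-(2n+1)t+n$ irreducible over $\mathbb{Q}$, and let $f\colon \mathbb{Z}[t,t^{-1}]/(\Delta_n) \to \mathbb{Z}[1/n,\xi]$ be the isomorphism sending $t$ to $a/n$, where $a = \frac{(2n+1)+\sqrt{4n+1}}{2}$ and $\xi = \frac{1+\sqrt{4n+1}}{2}$. Then $f$ intertwines the involution $p(t) \mapsto p(t^{-1})$ on $\mathbb{Z}[t,t^{-1}]/(\Delta_n)$ with the Galois conjugation $\sqrt{4n+1} \mapsto -\sqrt{4n+1}$ on $\mathbb{Z}[1/n,\xi]$. Consequently $f$ restricts to a group isomorphism between the unitary units $U(\Lambda_n) = \{u \in \Lambda_n^\times : u\bar{u} = 1\}$ and $\{x \in \mathbb{Z}[1/n,\xi]^\times : x\bar{x} = 1\}$. -/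

import Mathlib

open LaurentPolynomial in
/-- `Δₙ = n t² - (2n+1) t + n` as a Laurent polynomial over `ℤ`. -/
noncomputable def DeltaL (n : ℤ) : LaurentPolynomial ℤ :=
  LaurentPolynomial.C n * T 2 - LaurentPolynomial.C (2 * n + 1) * T 1 + LaurentPolynomial.C n

/-- `Δₙ` as a polynomial over `ℚ` (for the irreducibility hypothesis). -/
noncomputable def DeltaQ (n : ℤ) : Polynomial ℚ :=
  Polynomial.C (n : ℚ) * Polynomial.X ^ 2 - Polynomial.C ((2 * n + 1 : ℤ) : ℚ) * Polynomial.X +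
    Polynomial.C (n : ℚ)

/-- The quadratic field `K = ℚ(√(4n+1))`, realized as `ℚ[X]/(X² - (4n+1))`. -/
abbrev K5 (n : ℤ) := AdjoinRoot ((Polynomial.X : Polynomial ℚ) ^ 2 - Polynomial.C ((4 * n + 1 : ℤ) : ℚ))

/-- The square root `s = √(4n+1)` in `K`. -/
noncomputable abbrev s5 (n : ℤ) : K5 n := AdjoinRoot.root _

/-- `ξ = (1 + √(4n+1))/2`. -/
noncomputable abbrev xi5 (n : ℤ) : K5 n := algebraMap ℚ (K5 n) (1 / 2) * (1 + s5 n)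

/-- `a = ((2n+1) + √(4n+1))/2`. -/
noncomputable abbrev a5 (n : ℤ) : K5 n :=
  algebraMap ℚ (K5 n) (1 / 2) * (algebraMap ℚ (K5 n) ((2 * n + 1 : ℤ) : ℚ) + s5 n)

/-- The subring `ℤ[1/n, ξ]` of `K`. -/
noncomputable abbrev R5 (n : ℤ) : Subring (K5 n) :=
  Subring.closure {algebraMap ℚ (K5 n) ((n : ℚ)⁻¹), xi5 n}

/-- `Λₙ = ℤ[t,t⁻¹]/(Δₙ)`. -/
abbrev Lam (n : ℤ) := LaurentPolynomial ℤ ⧸ Ideal.span {DeltaL n}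


open LaurentPolynomial in
theorem laurent_ringHom_ext {S : Type*} [CommRing S]
    (g₁ g₂ : LaurentPolynomial ℤ →+* S)
    (h1 : g₁ (T 1) = g₂ (T 1)) (h2 : g₁ (T (-1)) = g₂ (T (-1))) : g₁ = g₂ := by
  have hT : ∀ m : ℤ, g₁ (T m) = g₂ (T m) := by
    intro m
    induction m using Int.induction_on with
    | zero => simp [T_zero]
    | succ k ih => rw [show ((k:ℤ)+1) = (k:ℤ)+1 from rfl, T_add, map_mul, map_mul, ih, h1]
    | pred k ih => rw [show (-(k:ℤ)-1) = (-(k:ℤ))+(-1) by ring, T_add, map_mul, map_mul, ih, h2]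
  have hC : ∀ a : ℤ, g₁ (C a) = g₂ (C a) := by
    intro a
    have := RingHom.ext_int (g₁.comp (C : ℤ →+* LaurentPolynomial ℤ))
      (g₂.comp (C : ℤ →+* LaurentPolynomial ℤ))
    exact RingHom.congr_fun this a
  refine RingHom.ext fun p => ?_
  induction p using LaurentPolynomial.induction_on' with
  | add p q hp hq => simp [map_add, hp, hq]
  | C_mul_T m a => rw [map_mul, map_mul, hC, hT]

set_option maxHeartbeats 1000000

/-- The isomorphism `f : Λₙ ≅ ℤ[1/n,ξ]` sending `t` to `a/n` intertwines
the involution `t ↦ t⁻¹` with Galois conjugation `√(4n+1) ↦ -√(4n+1)`; consequently it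
restricts to a bijection between the unitary units `{u : u·ū = 1}` on the two sides. -/
theorem stmt6 (n : ℤ) (hn : n ≠ 0) (hirr : Irreducible (DeltaQ n))
    (f : Lam n ≃+* R5 n)
    (hf : ((f (Ideal.Quotient.mk (Ideal.span {DeltaL n}) (LaurentPolynomial.T 1)) : K5 n) =
      algebraMap ℚ (K5 n) ((n : ℚ)⁻¹) * a5 n))
    (τ : Lam n →+* Lam n)
    (hτ : τ (Ideal.Quotient.mk (Ideal.span {DeltaL n}) (LaurentPolynomial.T 1)) =
      Ideal.Quotient.mk (Ideal.span {DeltaL n}) (LaurentPolynomial.T (-1)))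
    (σK : K5 n →+* K5 n) (hσK : σK (s5 n) = - s5 n)
    (σ : R5 n →+* R5 n) (hσ : ∀ x : R5 n, ((σ x : K5 n)) = σK (x : K5 n)) :
    (∀ x : Lam n, ((f (τ x) : K5 n)) = σK (f x)) ∧
    Set.BijOn (fun x : Lam n => f x) {u : Lam n | u * τ u = 1}
      {x : R5 n | x * σ x = 1} := by
  set c : ℚ →+* K5 n := algebraMap ℚ (K5 n) with hc
  have hn' : (n : ℚ) ≠ 0 := Int.cast_ne_zero.mpr hn
  have hfix : ∀ q : ℚ, σK (c q) = c q := fun q =>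
    RingHom.congr_fun (Subsingleton.elim (σK.comp c) c) q
  -- s² = 4n+1
  have hs2 : s5 n * s5 n = c ((4 * n + 1 : ℤ) : ℚ) := by
    have h0 := AdjoinRoot.eval₂_root ((Polynomial.X : Polynomial ℚ) ^ 2 -
      Polynomial.C ((4 * n + 1 : ℤ) : ℚ))
    simp only [Polynomial.eval₂_sub, Polynomial.eval₂_pow, Polynomial.eval₂_X,
      Polynomial.eval₂_C, sub_eq_zero] at h0
    rw [← AdjoinRoot.algebraMap_eq] at h0
    rw [show s5 n * s5 n = s5 n ^ 2 from (sq _).symm]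
    exact h0
  set mkQ := Ideal.Quotient.mk (Ideal.span {DeltaL n}) with hmkQ
  set u : K5 n := (f (mkQ (LaurentPolynomial.T 1)) : K5 n) with hu0
  set v : K5 n := (f (mkQ (LaurentPolynomial.T (-1))) : K5 n) with hv0
  have hT11 : mkQ (LaurentPolynomial.T 1) * mkQ (LaurentPolynomial.T (-1)) = 1 := by
    rw [← map_mul, ← LaurentPolynomial.T_add]
    norm_num [LaurentPolynomial.T_zero, map_one]
  have huv : u * v = 1 := by
    rw [hu0, hv0, ← Subring.coe_mul, ← map_mul, hT11, map_one, Subring.coe_one]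
  -- u * σK u = 1
  have husu : u * σK u = 1 := by
    rw [hf]
    simp only [a5, s5, map_mul, map_add, hσK, hfix, ← hc]
    have expand : ∀ q : ℚ, (c q + s5 n) * (c q - s5 n) = c q * c q - s5 n * s5 n := by
      intro q; ring
    rw [show c (n:ℚ)⁻¹ * (c (1/2) * (c ((2*n+1 : ℤ):ℚ) + s5 n)) *
        (c (n:ℚ)⁻¹ * (c (1/2) * (c ((2*n+1 : ℤ):ℚ) + - s5 n))) =
        c (n:ℚ)⁻¹ * c (n:ℚ)⁻¹ * c (1/2) * c (1/2) *
        ((c ((2*n+1 : ℤ):ℚ) + s5 n) * (c ((2*n+1 : ℤ):ℚ) - s5 n)) by ring]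
    rw [expand, hs2]
    simp only [← map_mul c, ← map_sub c]
    rw [show ((n:ℚ)⁻¹ * (n:ℚ)⁻¹ * (1/2) * (1/2) *
        (((2*n+1 : ℤ):ℚ) * ((2*n+1 : ℤ):ℚ) - ((4*n+1 : ℤ):ℚ)) = 1) from by
      push_cast; field_simp; ring]
    exact map_one c
  have hsu : σK u * u = 1 := by rw [mul_comm]; exact husu
  -- the two ring homs agree
  set incl : R5 n →+* K5 n := (R5 n).subtype with hincl
  set g₁ : LaurentPolynomial ℤ →+* K5 n := incl.comp ((f : Lam n →+* R5 n).comp (τ.comp mkQ))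
  set g₂ : LaurentPolynomial ℤ →+* K5 n := σK.comp (incl.comp ((f : Lam n →+* R5 n).comp mkQ))
  have hg1T1 : g₁ (LaurentPolynomial.T 1) = v := by
    simp only [g₁, RingHom.comp_apply, hτ]; rfl
  have hg2T1 : g₂ (LaurentPolynomial.T 1) = σK u := rfl
  have hvsu : v = σK u := by
    calc v = v * (u * σK u) := by rw [husu, mul_one]
    _ = (u * v) * σK u := by ring
    _ = σK u := by rw [huv, one_mul]
  have hτT : τ (mkQ (LaurentPolynomial.T (-1))) = mkQ (LaurentPolynomial.T 1) := by
    have h1 : τ (mkQ (LaurentPolynomial.T 1)) * τ (mkQ (LaurentPolynomial.T (-1))) = 1 := by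
      rw [← map_mul, hT11, map_one]
    rw [hτ] at h1
    calc τ (mkQ (LaurentPolynomial.T (-1)))
        = (mkQ (LaurentPolynomial.T 1) * mkQ (LaurentPolynomial.T (-1))) *
          τ (mkQ (LaurentPolynomial.T (-1))) := by rw [hT11, one_mul]
      _ = mkQ (LaurentPolynomial.T 1) * (mkQ (LaurentPolynomial.T (-1)) *
          τ (mkQ (LaurentPolynomial.T (-1)))) := by ring
      _ = mkQ (LaurentPolynomial.T 1) := by rw [h1, mul_one]
  have hg1Tm : g₁ (LaurentPolynomial.T (-1)) = u := by
    simp only [g₁, RingHom.comp_apply, hτT]; rfl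
  have hsv : σK v = u := by
    have h2 : σK u * σK v = 1 := by rw [← map_mul, huv, map_one]
    calc σK v = (σK u * u) * σK v := by rw [hsu, one_mul]
    _ = u * (σK u * σK v) := by ring
    _ = u := by rw [h2, mul_one]
  have hg2Tm : g₂ (LaurentPolynomial.T (-1)) = u := hsv
  have hg : g₁ = g₂ := laurent_ringHom_ext g₁ g₂ (by rw [hg1T1, hg2T1, hvsu]) (by rw [hg1Tm, hg2Tm])
  have H : ∀ x : Lam n, ((f (τ x) : K5 n)) = σK (f x) := by
    intro x
    obtain ⟨p, rfl⟩ := Ideal.Quotient.mk_surjective (I := Ideal.span {DeltaL n}) x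
    exact RingHom.congr_fun hg p
  refine ⟨H, ?_⟩
  have key : ∀ x : Lam n, x * τ x = 1 ↔ (f x) * σ (f x) = 1 := by
    intro x
    constructor
    · intro h
      apply Subtype.ext
      rw [Subring.coe_mul, hσ, ← H, ← Subring.coe_mul, ← map_mul, h, map_one]
    · intro h
      apply f.injective
      rw [map_mul f, map_one f]
      apply Subtype.ext
      rw [Subring.coe_mul, H, ← hσ, ← Subring.coe_mul, h]
  refine ⟨fun x hx => (key x).mp hx, f.injective.injOn, fun y hy => ?_⟩
  refine ⟨f.symm y, ?_, f.apply_symm_apply y⟩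
  have := (key (f.symm y))
  rw [f.apply_symm_apply] at this
  exact this.mpr hy
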